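/- Let I ⊆ ℝ be an interval, let κ : I → ℝ be continuously differentiable and positive, and let τ : I → ℝ be continuous. Let Θ be an antiderivative of τ, let g₁ be an antiderivative of s ↦ κ(s)sinh(Θ(s)) and g₂ an antiderivative of s ↦ κ(s)cosh(Θ(s)), and let y be an antiderivative of −g₁ and z an antiderivative of g₂. Then α(s) = (s, y(s), z(s)) is an admissible spacelike curve in the pseudo-Galilean space G¹₃ whose curvature equals κ(s) and whose torsion equals τ(s) for all s ∈ I, and whose Frenet frame is T(s) = (1, −g₁(s), g₂(s)), N(s) = (0, −sinh Θ(s), cosh Θ(s)), B(s) = (0, −cosh Θ(s), sinh Θ(s)). -/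

import Mathlib

private lemma myContDiffOn_of_hasDerivAt {I : Set ℝ} (hI : IsOpen I) {f g : ℝ → ℝ} {n : ℕ}
    (hf : ∀ s ∈ I, HasDerivAt f (g s) s) (hg : ContDiffOn ℝ n g I) :
    ContDiffOn ℝ (n + 1) f I := by
  rw [contDiffOn_succ_iff_deriv_of_isOpen hI]
  refine ⟨fun s hs => (hf s hs).differentiableAt.differentiableWithinAt, by simp, ?_⟩
  exact hg.congr fun s hs => (hf s hs).deriv

/-- Intrinsic construction of an admissible spacelike curve in `G¹₃` with
prescribed curvature `κ > 0` (continuously differentiable) and continuous torsion `τ`: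
with `Θ` an antiderivative of `τ`, `g₁` of `κ sinh Θ`, `g₂` of `κ cosh Θ`, `y` of `-g₁`
and `z` of `g₂`, the curve `α s = (s, y s, z s)` is admissible spacelike with curvature
`κ`, torsion `τ` and Frenet frame `T = (1, -g₁, g₂)`, `N = (0, -sinh Θ, cosh Θ)`,
`B = (0, -cosh Θ, sinh Θ)`. -/
theorem stmt_4
    (I : Set ℝ) (hIopen : IsOpen I) (hIconv : Convex ℝ I)
    (κ τ : ℝ → ℝ) (hκC1 : ContDiffOn ℝ 1 κ I) (hκpos : ∀ s ∈ I, 0 < κ s)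
    (hτ : ContinuousOn τ I)
    (Θ g₁ g₂ y z : ℝ → ℝ)
    (hΘ : ∀ s ∈ I, HasDerivAt Θ (τ s) s)
    (hg₁ : ∀ s ∈ I, HasDerivAt g₁ (κ s * Real.sinh (Θ s)) s)
    (hg₂ : ∀ s ∈ I, HasDerivAt g₂ (κ s * Real.cosh (Θ s)) s)
    (hy : ∀ s ∈ I, HasDerivAt y (-g₁ s) s)
    (hz : ∀ s ∈ I, HasDerivAt z (g₂ s) s) :
    ContDiffOn ℝ 3 y I ∧ ContDiffOn ℝ 3 z I ∧
    (∀ s ∈ I,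
      deriv y s = -g₁ s ∧
      deriv z s = g₂ s ∧
      (deriv (deriv y) s) ^ 2 - (deriv (deriv z) s) ^ 2 ≠ 0 ∧
      Real.sqrt |(deriv (deriv y) s) ^ 2 - (deriv (deriv z) s) ^ 2| = κ s ∧
      (deriv (deriv y) s * deriv (deriv (deriv z)) s -
        deriv (deriv (deriv y)) s * deriv (deriv z) s) / (κ s) ^ 2 = τ s ∧
      deriv (deriv y) s / κ s = -Real.sinh (Θ s) ∧
      deriv (deriv z) s / κ s = Real.cosh (Θ s)) ∧
    ∃ ε : ℝ, (ε = 1 ∨ ε = -1) ∧ ∀ s ∈ I,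
      |(deriv (deriv y) s) ^ 2 - (deriv (deriv z) s) ^ 2| =
        ε * ((deriv (deriv y) s) ^ 2 - (deriv (deriv z) s) ^ 2) ∧
      ε * deriv (deriv z) s / κ s = -Real.cosh (Θ s) ∧
      ε * deriv (deriv y) s / κ s = Real.sinh (Θ s) := by
  -- smoothness of Θ
  have hΘ1 : ContDiffOn ℝ 1 Θ I := by
    have := myContDiffOn_of_hasDerivAt (n := 0) hIopen hΘ (by simp only [Nat.cast_zero, contDiffOn_zero]; exact hτ)
    simpa using this
  have hsinh : ContDiffOn ℝ 1 (fun s => Real.sinh (Θ s)) I :=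
    Real.contDiff_sinh.comp_contDiffOn hΘ1
  have hcosh : ContDiffOn ℝ 1 (fun s => Real.cosh (Θ s)) I :=
    Real.contDiff_cosh.comp_contDiffOn hΘ1
  have hks : ContDiffOn ℝ 1 (fun s => κ s * Real.sinh (Θ s)) I := hκC1.mul hsinh
  have hkc : ContDiffOn ℝ 1 (fun s => κ s * Real.cosh (Θ s)) I := hκC1.mul hcosh
  have hg₁2 : ContDiffOn ℝ 2 g₁ I := by
    have := myContDiffOn_of_hasDerivAt (n := 1) hIopen hg₁ hks
    exact_mod_cast this
  have hg₂2 : ContDiffOn ℝ 2 g₂ I := by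
    have := myContDiffOn_of_hasDerivAt (n := 1) hIopen hg₂ hkc
    exact_mod_cast this
  have hy3 : ContDiffOn ℝ 3 y I := by
    have := myContDiffOn_of_hasDerivAt (n := 2) hIopen hy hg₁2.neg
    exact_mod_cast this
  have hz3 : ContDiffOn ℝ 3 z I := by
    have := myContDiffOn_of_hasDerivAt (n := 2) hIopen hz hg₂2
    exact_mod_cast this
  -- derivative of κ
  have hκd : ∀ s ∈ I, HasDerivAt κ (deriv κ s) s := fun s hs =>
    ((hκC1.differentiableOn one_ne_zero s hs).differentiableAt (hIopen.mem_nhds hs)).hasDerivAt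
  -- second derivatives
  have h2y : ∀ s ∈ I, HasDerivAt (deriv y) (-(κ s * Real.sinh (Θ s))) s := fun s hs =>
    ((hg₁ s hs).neg).congr_of_eventuallyEq
      (Filter.eventuallyEq_of_mem (hIopen.mem_nhds hs) fun t ht => (hy t ht).deriv)
  have h2z : ∀ s ∈ I, HasDerivAt (deriv z) (κ s * Real.cosh (Θ s)) s := fun s hs =>
    (hg₂ s hs).congr_of_eventuallyEq
      (Filter.eventuallyEq_of_mem (hIopen.mem_nhds hs) fun t ht => (hz t ht).deriv)
  -- third derivatives
  have h3y : ∀ s ∈ I, HasDerivAt (deriv (deriv y))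
      (-(deriv κ s * Real.sinh (Θ s) + κ s * (Real.cosh (Θ s) * τ s))) s := fun s hs => by
    have hin : HasDerivAt (fun t => κ t * Real.sinh (Θ t))
        (deriv κ s * Real.sinh (Θ s) + κ s * (Real.cosh (Θ s) * τ s)) s :=
      (hκd s hs).mul ((Real.hasDerivAt_sinh (Θ s)).comp s (hΘ s hs))
    exact hin.neg.congr_of_eventuallyEq
      (Filter.eventuallyEq_of_mem (hIopen.mem_nhds hs) fun t ht => (h2y t ht).deriv)
  have h3z : ∀ s ∈ I, HasDerivAt (deriv (deriv z))
      (deriv κ s * Real.cosh (Θ s) + κ s * (Real.sinh (Θ s) * τ s)) s := fun s hs => by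
    have hin : HasDerivAt (fun t => κ t * Real.cosh (Θ t))
        (deriv κ s * Real.cosh (Θ s) + κ s * (Real.sinh (Θ s) * τ s)) s :=
      (hκd s hs).mul ((Real.hasDerivAt_cosh (Θ s)).comp s (hΘ s hs))
    exact hin.congr_of_eventuallyEq
      (Filter.eventuallyEq_of_mem (hIopen.mem_nhds hs) fun t ht => (h2z t ht).deriv)
  refine ⟨hy3, hz3, ?_, -1, Or.inr rfl, ?_⟩
  · intro s hs
    have hk := hκpos s hs
    have hch := Real.cosh_sq_sub_sinh_sq (Θ s)
    have d2y : deriv (deriv y) s = -(κ s * Real.sinh (Θ s)) := (h2y s hs).deriv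
    have d2z : deriv (deriv z) s = κ s * Real.cosh (Θ s) := (h2z s hs).deriv
    have d3y : deriv (deriv (deriv y)) s
        = -(deriv κ s * Real.sinh (Θ s) + κ s * (Real.cosh (Θ s) * τ s)) := (h3y s hs).deriv
    have d3z : deriv (deriv (deriv z)) s
        = deriv κ s * Real.cosh (Θ s) + κ s * (Real.sinh (Θ s) * τ s) := (h3z s hs).deriv
    have key : (deriv (deriv y) s) ^ 2 - (deriv (deriv z) s) ^ 2 = -(κ s ^ 2) := by
      rw [d2y, d2z]; linear_combination (-(κ s ^ 2)) * hch
    refine ⟨(hy s hs).deriv, (hz s hs).deriv, ?_, ?_, ?_, ?_, ?_⟩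
    · rw [key]; exact neg_ne_zero.mpr (pow_ne_zero 2 hk.ne')
    · rw [key, abs_neg, abs_of_nonneg (sq_nonneg _), Real.sqrt_sq hk.le]
    · rw [d2y, d2z, d3y, d3z, div_eq_iff (pow_ne_zero 2 hk.ne')]
      linear_combination (κ s ^ 2 * τ s) * hch
    · rw [d2y]; field_simp
    · rw [d2z]; field_simp
  · intro s hs
    have hk := hκpos s hs
    have hch := Real.cosh_sq_sub_sinh_sq (Θ s)
    have d2y : deriv (deriv y) s = -(κ s * Real.sinh (Θ s)) := (h2y s hs).deriv
    have d2z : deriv (deriv z) s = κ s * Real.cosh (Θ s) := (h2z s hs).deriv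
    have key : (deriv (deriv y) s) ^ 2 - (deriv (deriv z) s) ^ 2 = -(κ s ^ 2) := by
      rw [d2y, d2z]; linear_combination (-(κ s ^ 2)) * hch
    refine ⟨?_, ?_, ?_⟩
    · rw [key, abs_neg, abs_of_nonneg (sq_nonneg _)]; ring
    · rw [d2z]; field_simp
    · rw [d2y]; field_simp
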